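/- Let X₁,…,X₅ ∈ ℝ³. The following are equivalent: (i) there exists (λ₁,…,λ₅, s₁, s₂, s₃, δt₁, δt₂) ∈ ℝ¹⁰, not all zero, such that for each i = 1,…,5: λᵢ(Xᵢ)₁ − s₃(Xᵢ)₂ + s₂(Xᵢ)₃ − δt₁ = 0 and λᵢ(Xᵢ)₂ + s₃(Xᵢ)₁ − s₁(Xᵢ)₃ − δt₂ = 0; (ii) there exists (s₁, s₂, s₃, δt₁, δt₂) ∈ ℝ⁵, not all zero, such that for each i = 1,…,5: s₃((Xᵢ)₁² + (Xᵢ)₂²) − s₂(Xᵢ)₂(Xᵢ)₃ − s₁(Xᵢ)₁(Xᵢ)₃ + δt₁(Xᵢ)₂ − δt₂(Xᵢ)₁ = 0. (This is the elimination of the scale variables λᵢ in the characterization of ill-posed world scenes for the 5-point problem.) -/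

import Mathlib

lemma exists_nonzero_kernel (M : Matrix (Fin 4) (Fin 5) ℝ) :
    ∃ v : Fin 5 → ℝ, v ≠ 0 ∧ M.mulVec v = 0 := by
  have h : ¬ Function.Injective M.mulVecLin := by
    intro h
    have := LinearMap.finrank_le_finrank_of_injective h
    simp [Module.finrank_pi] at this
  obtain ⟨a, b, hab, hne⟩ := Function.not_injective_iff.mp h
  exact ⟨a - b, sub_ne_zero.mpr hne, by
    have : M.mulVecLin (a - b) = 0 := by rw [map_sub, hab, sub_self]
    simpa using this⟩

/-- Elimination of the scale variables `λᵢ` in the characterization of ill-posed world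
scenes for the 5-point problem: for points `X₁, …, X₅ ∈ ℝ³`, the system
`λᵢ(Xᵢ)₁ − s₃(Xᵢ)₂ + s₂(Xᵢ)₃ − δt₁ = 0`, `λᵢ(Xᵢ)₂ + s₃(Xᵢ)₁ − s₁(Xᵢ)₃ − δt₂ = 0`
has a nonzero solution `(λ, s, δt) ∈ ℝ¹⁰` iff the system
`s₃((Xᵢ)₁² + (Xᵢ)₂²) − s₂(Xᵢ)₂(Xᵢ)₃ − s₁(Xᵢ)₁(Xᵢ)₃ + δt₁(Xᵢ)₂ − δt₂(Xᵢ)₁ = 0`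
has a nonzero solution `(s, δt) ∈ ℝ⁵`. -/
theorem eliminate_scales_five_point (X : Fin 5 → Fin 3 → ℝ) :
    (∃ (lam : Fin 5 → ℝ) (s : Fin 3 → ℝ) (dt1 dt2 : ℝ),
        ¬(lam = 0 ∧ s = 0 ∧ dt1 = 0 ∧ dt2 = 0) ∧
        ∀ i : Fin 5,
          lam i * X i 0 - s 2 * X i 1 + s 1 * X i 2 - dt1 = 0 ∧
          lam i * X i 1 + s 2 * X i 0 - s 0 * X i 2 - dt2 = 0) ↔
    (∃ (s : Fin 3 → ℝ) (dt1 dt2 : ℝ),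
        ¬(s = 0 ∧ dt1 = 0 ∧ dt2 = 0) ∧
        ∀ i : Fin 5,
          s 2 * (X i 0 ^ 2 + X i 1 ^ 2) - s 1 * X i 1 * X i 2 - s 0 * X i 0 * X i 2 +
            dt1 * X i 1 - dt2 * X i 0 = 0) := by
  constructor
  · rintro ⟨lam, s, dt1, dt2, hne, heq⟩
    by_cases hs : s = 0 ∧ dt1 = 0 ∧ dt2 = 0
    · obtain ⟨hs0, h1, h2⟩ := hs
      subst hs0 h1 h2
      have hlam : lam ≠ 0 := by tauto
      obtain ⟨i₀, hi₀⟩ := Function.ne_iff.mp hlam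
      simp only [Pi.zero_apply] at hi₀
      have hx0 : X i₀ 0 = 0 := by
        have := (heq i₀).1; simp at this
        rcases this with h | h
        · exact absurd h hi₀
        · exact h
      have hx1 : X i₀ 1 = 0 := by
        have := (heq i₀).2; simp at this
        rcases this with h | h
        · exact absurd h hi₀
        · exact h
      set M : Matrix (Fin 4) (Fin 5) ℝ := fun j k =>
        (![-(X (i₀.succAbove j) 0 * X (i₀.succAbove j) 2),
           -(X (i₀.succAbove j) 1 * X (i₀.succAbove j) 2),
           X (i₀.succAbove j) 0 ^ 2 + X (i₀.succAbove j) 1 ^ 2,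
           X (i₀.succAbove j) 1,
           -(X (i₀.succAbove j) 0)] : Fin 5 → ℝ) k with hM
      obtain ⟨v, hv, hMv⟩ := exists_nonzero_kernel M
      refine ⟨![v 0, v 1, v 2], v 3, v 4, ?_, fun i => ?_⟩
      · rintro ⟨hsv, h3, h4⟩
        apply hv
        funext k
        fin_cases k
        · exact congrFun hsv 0
        · exact congrFun hsv 1
        · exact congrFun hsv 2
        · exact h3
        · exact h4
      · by_cases hi : i = i₀
        · subst hi
          simp [hx0, hx1]
        · obtain ⟨j, hj⟩ := Fin.exists_succAbove_eq hi
          have := congrFun hMv j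
          simp only [Matrix.mulVec, dotProduct, Pi.zero_apply, hM] at this
          rw [Fin.sum_univ_five] at this
          simp only [Matrix.cons_val_zero, Matrix.cons_val_one, Matrix.head_cons,
            Matrix.cons_val_two, Matrix.tail_cons, Matrix.cons_val_three,
            Matrix.cons_val_four] at this
          rw [hj] at this
          simp only [Matrix.cons_val_zero, Matrix.cons_val_one, Matrix.head_cons,
            Matrix.cons_val_two, Matrix.tail_cons]
          linarith [this]
    · refine ⟨s, dt1, dt2, hs, fun i => ?_⟩
      obtain ⟨h1, h2⟩ := heq i
      linear_combination (-X i 1) * h1 + (X i 0) * h2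
  · rintro ⟨s, dt1, dt2, hne, heq⟩
    by_cases h0 : ∃ i, X i 0 = 0 ∧ X i 1 = 0
    · obtain ⟨i₀, hx0, hx1⟩ := h0
      refine ⟨fun i => if i = i₀ then 1 else 0, 0, 0, 0, ?_, fun i => ?_⟩
      · rintro ⟨hl, -⟩
        have := congrFun hl i₀
        simp at this
      · by_cases hi : i = i₀
        · subst hi; simp [hx0, hx1]
        · simp [hi]
    · push_neg at h0
      refine ⟨fun i => if X i 0 ≠ 0 then (s 2 * X i 1 - s 1 * X i 2 + dt1) / X i 0
          else (s 0 * X i 2 + dt2 - s 2 * X i 0) / X i 1, s, dt1, dt2, by tauto,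
          fun i => ?_⟩
      have hii := heq i
      by_cases hx : X i 0 ≠ 0
      · simp only [hx, if_true, ne_eq, not_false_eq_true]
        constructor
        · field_simp
          ring
        · field_simp
          linear_combination hii
      · push_neg at hx
        have hx1 : X i 1 ≠ 0 := h0 i hx
        simp only [hx, ne_eq, not_true_eq_false, if_false, not_not, if_neg]
        rw [hx] at hii
        constructor
        · have : X i 1 * (s 2 * X i 1 - s 1 * X i 2 + dt1) = 0 := by linear_combination hii
          have h2 := (mul_eq_zero.mp this).resolve_left hx1
          linarith
        · field_simp
          ring
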